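/- For every 0 < α ≤ 1 and every t ∈ ℝ, (1 − |t|^α)_+ = α (1 − |t|)_+ + (1−α) α ∫_1^∞ (1 − |t| s)_+ s^{−α−1} ds. (In terms of characteristic functions this says μ_α = μ_1 ∘ (α δ̃_1 + (1−α) π̃_α), i.e. the weakly stable measure with characteristic function (1 − |t|^α)_+ is the scale mixture of the measure with characteristic function (1 − |t|)_+ by the mixture of the symmetrized Dirac measure at 1 and the symmetrized Pareto distribution with density (α/2)|s|^{−α−1} 1_{(1,∞)}(|s|).) -/

import Mathlib

open MeasureTheory Set

/-- For every `0 < α ≤ 1` and `t ∈ ℝ`,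
`(1 - |t|^α)_+ = α (1 - |t|)_+ + (1-α) α ∫_1^∞ (1 - |t| s)_+ s^(-α-1) ds`.
In terms of characteristic functions, `μ_α = μ_1 ∘ (α δ̃₁ + (1-α) π̃_α)`: the weakly
stable measure with characteristic function `(1 - |t|^α)_+` is the scale mixture of the
measure with characteristic function `(1 - |t|)_+` by `α δ̃₁ + (1-α) π̃_α`. -/
theorem kendall_charFun_mixture
    (α : ℝ) (hα : 0 < α) (hα1 : α ≤ 1) (t : ℝ) :
    max (1 - |t| ^ α) 0
      = α * max (1 - |t|) 0
        + (1 - α) * α * ∫ s in Set.Ioi (1:ℝ), max (1 - |t| * s) 0 * s ^ (-α - 1) := by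
  rcases eq_or_lt_of_le hα1 with h1 | hlt
  · subst h1; simp [Real.rpow_one]
  set r := |t| with hrdef
  have hr0 : 0 ≤ r := abs_nonneg t
  rcases le_or_gt 1 r with hr1 | hr1
  · -- r ≥ 1 : everything vanishes
    have hA : (1:ℝ) ≤ r ^ α := Real.one_le_rpow hr1 hα.le
    have hI : ∫ s in Set.Ioi (1:ℝ), max (1 - r * s) 0 * s ^ (-α - 1) = 0 := by
      rw [setIntegral_congr_fun measurableSet_Ioi
        (g := fun _ => (0:ℝ)) ?_, integral_zero]
      intro s hs
      have hs1 : (1:ℝ) < s := hs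
      have : (1:ℝ) < r * s := by nlinarith
      simp [max_eq_right (by linarith : 1 - r * s ≤ 0)]
    rw [hI, max_eq_right (by linarith : 1 - r ^ α ≤ 0),
      max_eq_right (by linarith : 1 - r ≤ 0)]
    ring
  rcases eq_or_lt_of_le hr0 with h0 | h0
  · -- r = 0
    have hI : ∫ s in Set.Ioi (1:ℝ), max (1 - r * s) 0 * s ^ (-α - 1)
        = ∫ s in Set.Ioi (1:ℝ), s ^ (-α - 1) := by
      rw [← h0]; simp
    rw [hI, integral_Ioi_rpow_of_lt (by linarith) one_pos, ← h0,
      Real.zero_rpow hα.ne', show (-α - 1) + 1 = -α by ring, Real.one_rpow]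
    field_simp
    norm_num
  · -- 0 < r < 1
    set b : ℝ := r⁻¹ with hbdef
    have hb1 : 1 < b := one_lt_inv_iff₀.mpr ⟨h0, hr1⟩
    have hb0 : 0 < b := by linarith
    have hbr : r * b = 1 := mul_inv_cancel₀ h0.ne'
    have hkey : ∀ s ∈ Set.Ioi (1:ℝ), max (1 - r * s) 0 * s ^ (-α - 1)
        = (Set.Ioc 1 b).indicator (fun s => (1 - r * s) * s ^ (-α - 1)) s := by
      intro s hs
      have hs1 : (1:ℝ) < s := hs
      by_cases hsb : s ≤ b
      · rw [Set.indicator_of_mem (Set.mem_Ioc.mpr ⟨hs1, hsb⟩)]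
        have h2 : r * s ≤ r * b := by nlinarith
        rw [hbr] at h2
        rw [max_eq_left (by linarith)]
      · rw [Set.indicator_of_notMem (fun h => hsb h.2)]
        push_neg at hsb
        have h2 : r * b < r * s := by nlinarith
        rw [hbr] at h2
        rw [max_eq_right (by linarith), zero_mul]
    rw [setIntegral_congr_fun measurableSet_Ioi hkey, setIntegral_indicator measurableSet_Ioc]
    have hinter : Set.Ioi (1:ℝ) ∩ Set.Ioc 1 b = Set.Ioc 1 b := by
      rw [Set.inter_eq_right]; exact Set.Ioc_subset_Ioi_self
    rw [hinter, ← intervalIntegral.integral_of_le hb1.le]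
    have h0uIcc : (0:ℝ) ∉ Set.uIcc 1 b := Set.notMem_uIcc_of_lt one_pos hb0
    have hcong : ∀ s ∈ Set.uIcc (1:ℝ) b, (1 - r * s) * s ^ (-α - 1)
        = s ^ (-α - 1) - r * s ^ (-α) := by
      intro s hs
      rw [Set.uIcc_of_le hb1.le] at hs
      have hs0 : 0 < s := by linarith [hs.1]
      have h2 := Real.rpow_add hs0 1 (-α - 1)
      rw [Real.rpow_one, show (1:ℝ) + (-α - 1) = -α from by ring] at h2
      rw [h2]; ring
    rw [intervalIntegral.integral_congr hcong,
      intervalIntegral.integral_sub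
        (intervalIntegral.intervalIntegrable_rpow (Or.inr h0uIcc))
        ((intervalIntegral.intervalIntegrable_rpow (Or.inr h0uIcc)).const_mul r),
      intervalIntegral.integral_const_mul,
      integral_rpow (Or.inr ⟨by intro h; simp at h; linarith, h0uIcc⟩),
      integral_rpow (Or.inr ⟨by intro h; simp at h; linarith, h0uIcc⟩),
      show (-α - 1) + 1 = -α by ring, show (-α) + 1 = 1 - α by ring, Real.one_rpow, Real.one_rpow]
    have hbna : b ^ (-α) = r ^ α := by
      rw [hbdef, ← Real.rpow_neg_one r, ← Real.rpow_mul hr0]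
      norm_num
    have hbn1a : b ^ (1 - α) = r ^ (α - 1) := by
      rw [hbdef, ← Real.rpow_neg_one r, ← Real.rpow_mul hr0]
      ring_nf
    rw [hbna, hbn1a]
    have hmul : r * r ^ (α - 1) = r ^ α := by
      have h2 := Real.rpow_add h0 1 (α - 1)
      rw [Real.rpow_one, show (1:ℝ) + (α - 1) = α from by ring] at h2
      exact h2.symm
    have hlt1 : r ^ α < 1 := Real.rpow_lt_one hr0 hr1 hα
    rw [max_eq_left (by linarith), max_eq_left (by linarith)]
    have key : r * ((r ^ (α - 1) - 1) / (1 - α)) = (r ^ α - r) / (1 - α) := by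
      rw [mul_div_assoc']
      congr 1
      rw [mul_sub, hmul, mul_one]
    rw [key, div_neg, ← neg_div, neg_sub]
    have hαne : α ≠ 0 := hα.ne'
    have h1αne : (1:ℝ) - α ≠ 0 := sub_ne_zero.mpr hlt.ne'
    field_simp
    ring
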